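/- For every real number y with 0 ≤ y ≤ 1, the expression y + (1 - y) * exp(-y) is at least 4/5. -/
import Mathlib


theorem stmt_2 (y : ℝ) (h0 : 0 ≤ y) (h1 : y ≤ 1) :
    4 / 5 ≤ y + (1 - y) * Real.exp (-y) := by
  have hb := Real.exp_bound (x := -y) (by rw [abs_neg, abs_of_nonneg h0]; exact h1) (by norm_num : 0 < 6)
  have hs : ∑ i ∈ Finset.range 6, (-y)^i / (Nat.factorial i : ℝ)
      = 1 - y + y^2/2 - y^3/6 + y^4/24 - y^5/120 := by
    simp [Finset.sum_range_succ, Nat.factorial]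
    ring
  rw [hs] at hb
  have habs : |(-y)| = y := by rw [abs_neg, abs_of_nonneg h0]
  rw [habs] at hb
  have hlo : 1 - y + y^2/2 - y^3/6 + y^4/24 - y^5/120 - y^6 * (7 / 4320) ≤ Real.exp (-y) := by
    have := abs_le.mp hb
    have h2 := this.1
    norm_num [Nat.factorial] at h2 ⊢
    linarith
  have hy1 : (0:ℝ) ≤ 1 - y := by linarith
  have hmul := mul_le_mul_of_nonneg_left hlo hy1
  have hpoly : 4 / 5 ≤ y + (1 - y) * (1 - y + y^2/2 - y^3/6 + y^4/24 - y^5/120 - y^6 * (7/4320)) := by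
    nlinarith [sq_nonneg (y - 443/1000), sq_nonneg (y*(y - 443/1000)), sq_nonneg (y^2*(y-443/1000)), mul_nonneg h0 (sub_nonneg.2 h1), mul_nonneg (mul_nonneg h0 h0) (sub_nonneg.2 h1), sq_nonneg (y^2 - y), mul_nonneg (mul_nonneg (mul_nonneg h0 h0) h0) (sub_nonneg.2 h1), mul_nonneg (mul_nonneg (mul_nonneg (mul_nonneg h0 h0) h0) h0) (sub_nonneg.2 h1), sq_nonneg y]
  linarith
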